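/- Let S be an additive abelian group and χ : S → ℂˣ a group homomorphism. Consider the affine Lie algebra L̂_S = (L_S ⊗ ℂ[t,t⁻¹]) ⊕ ℂ·k, with k central and [a⊗t^m, b⊗t^n] = (a·b − b·a)⊗t^{m+n} + m·⟨a,b⟩·δ_{m+n,0}·k, the covariant operation [x,y]_S defined by [k, x]_S = [x, k]_S = 0 and [a⊗t^m, b⊗t^n]_S = ∑_{γ∈S} χ(γ)^m·( [σ_γ(a), b]⊗t^{m+n} + m·⟨σ_γ(a), b⟩·δ_{m+n,0}·k ) (a finite sum), and the subspace I_S = span_ℂ{ χ(γ)^m·(σ_γ(a)⊗t^m) − a⊗t^m : γ ∈ S, a ∈ L_S, m ∈ ℤ }. Then [x,y]_S maps I_S × L̂_S and L̂_S × I_S into I_S, the induced operation on the quotient L̂_S/I_S is a Lie bracket, and the linear map ψ_A : Â_S → L̂_S/I_S determined by ψ_A(c) = k + I_S and ψ_A(A_{α,m}) = (L_{α,0}⊗t^m) + I_S is an isomorphism of complex Lie algebras. -/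

import Mathlib

open scoped Classical

/-! The trigonometric Lie algebra `Â_S`. -/

/-- The underlying vector space `ℂ ⊕ ((S × ℤ) →₀ ℂ)` of `Â_S`. -/
abbrev TrigA (S : Type*) := ℂ × ((S × ℤ) →₀ ℂ)

/-- The central basis element `c`. -/
noncomputable def Acen (S : Type*) : TrigA S := (1, 0)

/-- The basis element `A_{α,m}`. -/
noncomputable def Agen {S : Type*} (α : S) (m : ℤ) : TrigA S := (0, Finsupp.single (α, m) 1)

/-- The value of the bracket of `Â_S` on basis elements. -/
noncomputable def AbrkBasis {S : Type*} [AddCommGroup S] (χ : S → ℂˣ) (p q : S × ℤ) :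
    TrigA S :=
  ((if p.1 + q.1 = 0 ∧ p.2 + q.2 = 0 then (p.2 : ℂ) else 0),
    Finsupp.single (p.1 + q.1, p.2 + q.2)
      (((χ (p.2 • q.1 - q.2 • p.1) : ℂˣ) : ℂ) - ((χ (q.2 • p.1 - p.2 • q.1) : ℂˣ) : ℂ)))

/-- The Lie bracket of `Â_S`. -/
noncomputable def Abrk {S : Type*} [AddCommGroup S] (χ : S → ℂˣ) (x y : TrigA S) : TrigA S :=
  x.2.sum fun p a => y.2.sum fun q b => (a * b) • AbrkBasis χ p q

/-! The associative algebra `L_S`, viewed as a Lie algebra. -/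

/-- The underlying vector space of `L_S`, with standard basis `{L_{α,β}}`. -/
abbrev LSpace (S : Type*) := (S × S) →₀ ℂ

/-- The basis element `L_{α,β}`. -/
noncomputable def Lgen {S : Type*} (α β : S) : LSpace S := Finsupp.single (α, β) 1

/-- `L_{α,β} · L_{μ,ν} = δ_{α+μ, β−ν} · L_{α+μ, α+ν}`. -/
noncomputable def LmulBasis {S : Type*} [AddCommGroup S] (p q : S × S) : LSpace S :=
  if p.1 + q.1 = p.2 - q.2 then Finsupp.single (p.1 + q.1, p.1 + q.2) 1 else 0

/-- `⟨L_{α,β}, L_{μ,ν}⟩ = δ_{α+μ,0} · δ_{β,ν}`. -/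
noncomputable def LformBasis {S : Type*} [AddCommGroup S] (p q : S × S) : ℂ :=
  if p.1 + q.1 = 0 ∧ p.2 = q.2 then 1 else 0

/-- The translation automorphism `σ_γ` of `L_S`: `σ_γ(L_{α,β}) = L_{α,β+γ}`. -/
noncomputable def sigmaL {S : Type*} [AddCommGroup S] (γ : S) (a : LSpace S) : LSpace S :=
  a.sum fun p x => Finsupp.single (p.1, p.2 + γ) x

/-! The affine Lie algebra `L̂_S = (L_S ⊗ ℂ[t,t⁻¹]) ⊕ ℂ·k`, realized on the basis
`{L_{α,β} ⊗ t^m} ∪ {k}`. -/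

/-- The underlying vector space of `L̂_S`. -/
abbrev HatL (S : Type*) := ℂ × (((S × S) × ℤ) →₀ ℂ)

/-- The central element `k` of `L̂_S`. -/
noncomputable def Hatk (S : Type*) : HatL S := (1, 0)

/-- `a ⊗ t^m` for `a ∈ L_S`. -/
noncomputable def embedHat {S : Type*} (a : LSpace S) (m : ℤ) : HatL S :=
  (0, a.sum fun r x => Finsupp.single (r, m) x)

/-- The affine bracket on basis elements:
`[L_p ⊗ t^m, L_q ⊗ t^n] = (L_p·L_q − L_q·L_p) ⊗ t^{m+n} + m·⟨L_p,L_q⟩·δ_{m+n,0}·k`. -/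
noncomputable def hatBrkBasis {S : Type*} [AddCommGroup S] (P Q : (S × S) × ℤ) : HatL S :=
  ((if P.2 + Q.2 = 0 then (P.2 : ℂ) * LformBasis P.1 Q.1 else 0),
    (LmulBasis P.1 Q.1 - LmulBasis Q.1 P.1).sum fun r x => Finsupp.single (r, P.2 + Q.2) x)

/-- The bracket of the affine Lie algebra `L̂_S` (with `k` central). -/
noncomputable def hatBrk {S : Type*} [AddCommGroup S] (x y : HatL S) : HatL S :=
  x.2.sum fun P a => y.2.sum fun Q b => (a * b) • hatBrkBasis P Q

/-- The `(S,χ)`-covariant operation on `L̂_S`: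
`[a⊗t^m, b⊗t^n]_S = ∑_{γ∈S} χ(γ)^m ([σ_γ(a), b]⊗t^{m+n} + m⟨σ_γ(a), b⟩δ_{m+n,0} k)`,
with `[k, ·]_S = [·, k]_S = 0`. -/
noncomputable def hatBrkCov {S : Type*} [AddCommGroup S] (χ : S → ℂˣ) (x y : HatL S) :
    HatL S :=
  x.2.sum fun P a => y.2.sum fun Q b =>
    (a * b) • ∑ᶠ γ : S, ((χ γ ^ P.2 : ℂˣ) : ℂ) • hatBrkBasis ((P.1.1, P.1.2 + γ), P.2) Q

/-- The subspace `I_S = span_ℂ{χ(γ)^m (σ_γ(a) ⊗ t^m) − a ⊗ t^m}`. -/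
noncomputable def Icov {S : Type*} [AddCommGroup S] (χ : S → ℂˣ) : Submodule ℂ (HatL S) :=
  Submodule.span ℂ {x : HatL S | ∃ (γ : S) (a : LSpace S) (m : ℤ),
    x = ((χ γ ^ m : ℂˣ) : ℂ) • embedHat (sigmaL γ a) m - embedHat a m}

section Aux
variable {S : Type*} [AddCommGroup S] {χ : S → ℂˣ}

lemma chi_zero (hχ : ∀ a b : S, χ (a + b) = χ a * χ b) : χ 0 = 1 := by
  have h := hχ 0 0
  rw [add_zero] at h
  exact mul_left_cancel (a := χ 0) (by rw [← h, mul_one])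

lemma chi_neg (hχ : ∀ a b : S, χ (a + b) = χ a * χ b) (s : S) : χ (-s) = (χ s)⁻¹ := by
  have h := hχ s (-s)
  rw [add_neg_cancel, chi_zero hχ] at h
  exact eq_inv_of_mul_eq_one_right (by rw [← h])

lemma chi_zsmul (hχ : ∀ a b : S, χ (a + b) = χ a * χ b) (k : ℤ) (s : S) :
    χ (k • s) = χ s ^ k := by
  induction k using Int.induction_on with
  | zero => simpa using chi_zero hχ
  | succ n ih => rw [add_smul, one_smul, hχ, ih]; rw [zpow_add_one]
  | pred n ih => rw [sub_smul, one_smul, sub_eq_add_neg, hχ, ih, chi_neg hχ]; rw [zpow_sub_one]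

end Aux
section Aux2
variable {S : Type*} [AddCommGroup S] {χ : S → ℂˣ}

/-- coefficient of the trig bracket -/
noncomputable def Acoef (χ : S → ℂˣ) (p q : S × ℤ) : ℂ :=
  ((χ (p.2 • q.1 - q.2 • p.1) : ℂˣ) : ℂ) - ((χ (q.2 • p.1 - p.2 • q.1) : ℂˣ) : ℂ)

lemma AbrkBasis_eq (p q : S × ℤ) :
    AbrkBasis χ p q = ((if p.1 + q.1 = 0 ∧ p.2 + q.2 = 0 then (p.2 : ℂ) else 0),
      Finsupp.single (p.1 + q.1, p.2 + q.2) (Acoef χ p q)) := rfl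

lemma Abrk_def (x y : TrigA S) :
    Abrk χ x y = x.2.sum fun p a => y.2.sum fun q b => (a * b) • AbrkBasis χ p q := rfl

lemma Abrk_fst_irrel (c d : ℂ) (f g : (S × ℤ) →₀ ℂ) (x y : TrigA S)
    (hf : x.2 = f) (hg : y.2 = g) : Abrk χ x y = Abrk χ (c, f) (d, g) := by
  rw [Abrk_def, Abrk_def, hf, hg]

lemma inner_zero (y : TrigA S) (p : S × ℤ) :
    (y.2.sum fun q b => ((0:ℂ) * b) • AbrkBasis χ p q) = 0 := by
  simp

lemma Abrk_add_left (x x' y : TrigA S) :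
    Abrk χ (x + x') y = Abrk χ x y + Abrk χ x' y := by
  rw [Abrk_def, Abrk_def, Abrk_def]
  show (x.2 + x'.2).sum _ = _
  rw [Finsupp.sum_add_index' (fun p => inner_zero y p)]
  intro p a a'
  rw [← Finsupp.sum_add]
  congr 1; funext q b
  module

lemma Abrk_add_right (x y y' : TrigA S) :
    Abrk χ x (y + y') = Abrk χ x y + Abrk χ x y' := by
  rw [Abrk_def, Abrk_def, Abrk_def, ← Finsupp.sum_add]
  congr 1; funext p a
  show (y.2 + y'.2).sum _ = _
  rw [Finsupp.sum_add_index' (by simp) (fun q b b' => by module)]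

lemma Abrk_smul_left (r : ℂ) (x y : TrigA S) :
    Abrk χ (r • x) y = r • Abrk χ x y := by
  rw [Abrk_def, Abrk_def]
  show (r • x.2).sum _ = _
  rw [Finsupp.sum_smul_index (fun p => inner_zero y p), Finsupp.smul_sum]
  congr 1; funext p a
  rw [Finsupp.smul_sum]
  congr 1; funext q b
  module

lemma Abrk_smul_right (r : ℂ) (x y : TrigA S) :
    Abrk χ x (r • y) = r • Abrk χ x y := by
  rw [Abrk_def, Abrk_def, Finsupp.smul_sum]
  congr 1; funext p a
  show (r • y.2).sum _ = _
  rw [Finsupp.sum_smul_index (by simp), Finsupp.smul_sum]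
  congr 1; funext q b
  module

lemma Abrk_single_single (c d : ℂ) (p q : S × ℤ) (a b : ℂ) :
    Abrk χ (c, Finsupp.single p a) (d, Finsupp.single q b) = (a * b) • AbrkBasis χ p q := by
  rw [Abrk_def]
  show (Finsupp.single p a).sum _ = _
  rw [Finsupp.sum_single_index (inner_zero (d, Finsupp.single q b) p)]
  show (Finsupp.single q b).sum _ = _
  rw [Finsupp.sum_single_index (by simp)]

end Aux2
section Aux3
variable {S : Type*} [AddCommGroup S] {χ : S → ℂˣ}

lemma AbrkBasis_skew (p q : S × ℤ) : AbrkBasis χ p q = - AbrkBasis χ q p := by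
  rw [AbrkBasis_eq, AbrkBasis_eq, Prod.neg_mk]
  refine Prod.ext ?_ ?_
  · show _ = -(if q.1 + p.1 = 0 ∧ q.2 + p.2 = 0 then (q.2 : ℂ) else 0)
    rw [show q.1 + p.1 = p.1 + q.1 from add_comm _ _, show q.2 + p.2 = p.2 + q.2 from add_comm _ _]
    split_ifs with h
    · have h2 : p.2 = -q.2 := by omega
      rw [h2]; push_cast; ring
    · simp
  · show Finsupp.single _ _ = - Finsupp.single _ _
    rw [← Finsupp.single_neg]
    congr 1
    · exact Prod.ext (add_comm _ _) (add_comm _ _)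
    · unfold Acoef; ring

lemma Abrk_skew (x y : TrigA S) : Abrk χ x y = - Abrk χ y x := by
  rw [Abrk_def, Abrk_def, Finsupp.sum_comm]
  rw [show -(y.2.sum fun p a => x.2.sum fun q b => (a * b) • AbrkBasis χ p q)
      = y.2.sum fun p a => -(x.2.sum fun q b => (a * b) • AbrkBasis χ p q) from
      Finsupp.sum_neg.symm]
  congr 1; funext q b
  rw [show -(x.2.sum fun p a => (b * a) • AbrkBasis χ q p)
      = x.2.sum fun p a => -((b * a) • AbrkBasis χ q p) from Finsupp.sum_neg.symm]
  congr 1; funext p a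
  rw [AbrkBasis_skew]
  module

lemma Abrk_self (x : TrigA S) : Abrk χ x x = 0 := by
  have h := Abrk_skew (χ := χ) x x
  have := eq_neg_iff_add_eq_zero.mp h
  have h2 : (2:ℂ) • Abrk χ x x = 0 := by rw [two_smul ℂ (Abrk χ x x)]; exact this
  have : (2:ℂ) = 0 ∨ Abrk χ x x = 0 := Or.inr (by simpa [smul_smul] using congrArg ((2:ℂ)⁻¹ • ·) h2)
  rcases this with h | h
  · norm_num at h
  · exact h

lemma jac_coeff (hχ : ∀ a b : S, χ (a + b) = χ a * χ b) (A B C : S) :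
    (((χ A : ℂˣ) : ℂ) - ((χ (-A) : ℂˣ) : ℂ)) * (((χ (B + -C) : ℂˣ) : ℂ) - ((χ (C + -B) : ℂˣ) : ℂ))
    + (((χ B : ℂˣ) : ℂ) - ((χ (-B) : ℂˣ) : ℂ)) * (((χ (C + -A) : ℂˣ) : ℂ) - ((χ (A + -C) : ℂˣ) : ℂ))
    + (((χ C : ℂˣ) : ℂ) - ((χ (-C) : ℂˣ) : ℂ)) * (((χ (A + -B) : ℂˣ) : ℂ) - ((χ (B + -A) : ℂˣ) : ℂ)) = 0 := by
  have h : ∀ a b : S, ((χ (a + b) : ℂˣ) : ℂ) = ((χ a : ℂˣ) : ℂ) * ((χ b : ℂˣ) : ℂ) := by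
    intro a b; rw [hχ a b, Units.val_mul]
  simp only [h]
  ring

end Aux3
section Aux4
variable {S : Type*} [AddCommGroup S] {χ : S → ℂˣ}

lemma Abrk_AbrkBasis_single (p q r : S × ℤ) (c : ℂ) :
    Abrk χ (AbrkBasis χ p q) (0, Finsupp.single r c) =
      (Acoef χ p q * c) • AbrkBasis χ (p.1 + q.1, p.2 + q.2) r := by
  rw [AbrkBasis_eq p q]
  exact Abrk_single_single _ _ _ _ _ _

lemma jacobi_basis (hχ : ∀ a b : S, χ (a + b) = χ a * χ b) (p q r : S × ℤ) :
    Acoef χ p q • AbrkBasis χ (p.1 + q.1, p.2 + q.2) r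
    + Acoef χ q r • AbrkBasis χ (q.1 + r.1, q.2 + r.2) p
    + Acoef χ r p • AbrkBasis χ (r.1 + p.1, r.2 + p.2) q = 0 := by
  simp only [AbrkBasis_eq, Prod.smul_mk, Prod.mk_add_mk, smul_eq_mul, Finsupp.smul_single]
  rw [Prod.mk_eq_zero]
  constructor
  · rw [show q.1 + r.1 + p.1 = p.1 + q.1 + r.1 from by abel,
        show q.2 + r.2 + p.2 = p.2 + q.2 + r.2 from by omega,
        show r.1 + p.1 + q.1 = p.1 + q.1 + r.1 from by abel,
        show r.2 + p.2 + q.2 = p.2 + q.2 + r.2 from by omega]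
    split_ifs with h
    · obtain ⟨h1, h2⟩ := h
      have hr1 : r.1 = -(p.1 + q.1) := eq_neg_of_add_eq_zero_right h1
      have hr2 : r.2 = -(p.2 + q.2) := eq_neg_of_add_eq_zero_right h2
      have e1 : Acoef χ q r = Acoef χ p q := by
        unfold Acoef
        rw [show q.2 • r.1 - r.2 • q.1 = p.2 • q.1 - q.2 • p.1 from by rw [hr1, hr2]; module,
            show r.2 • q.1 - q.2 • r.1 = q.2 • p.1 - p.2 • q.1 from by rw [hr1, hr2]; module]
      have e2 : Acoef χ r p = Acoef χ p q := by
        unfold Acoef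
        rw [show r.2 • p.1 - p.2 • r.1 = p.2 • q.1 - q.2 • p.1 from by rw [hr1, hr2]; module,
            show p.2 • r.1 - r.2 • p.1 = q.2 • p.1 - p.2 • q.1 from by rw [hr1, hr2]; module]
      rw [e1, e2]
      have hc : (p.2 : ℂ) + q.2 + r.2 = 0 := by exact_mod_cast h2
      push_cast
      linear_combination 2 * Acoef χ p q * hc
    · simp
  · rw [show ((q.1 + r.1 + p.1 : S), (q.2 + r.2 + p.2 : ℤ)) = ((p.1 + q.1 + r.1 : S), (p.2 + q.2 + r.2 : ℤ)) from by
        simp only [Prod.mk.injEq]; exact ⟨by abel, by omega⟩,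
       show ((r.1 + p.1 + q.1 : S), (r.2 + p.2 + q.2 : ℤ)) = ((p.1 + q.1 + r.1 : S), (p.2 + q.2 + r.2 : ℤ)) from by
        simp only [Prod.mk.injEq]; exact ⟨by abel, by omega⟩,
       ← Finsupp.single_add, ← Finsupp.single_add]
    rw [show Acoef χ p q * Acoef χ (p.1 + q.1, p.2 + q.2) r
          + Acoef χ q r * Acoef χ (q.1 + r.1, q.2 + r.2) p
          + Acoef χ r p * Acoef χ (r.1 + p.1, r.2 + p.2) q = 0 from ?_, Finsupp.single_zero]
    unfold Acoef
    dsimp only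
    rw [show q.2 • p.1 - p.2 • q.1 = -(p.2 • q.1 - q.2 • p.1) from by module,
        show (p.2 + q.2) • r.1 - r.2 • (p.1 + q.1) = (q.2 • r.1 - r.2 • q.1) + -(r.2 • p.1 - p.2 • r.1) from by module,
        show r.2 • (p.1 + q.1) - (p.2 + q.2) • r.1 = (r.2 • p.1 - p.2 • r.1) + -(q.2 • r.1 - r.2 • q.1) from by module,
        show r.2 • q.1 - q.2 • r.1 = -(q.2 • r.1 - r.2 • q.1) from by module,
        show (q.2 + r.2) • p.1 - p.2 • (q.1 + r.1) = (r.2 • p.1 - p.2 • r.1) + -(p.2 • q.1 - q.2 • p.1) from by module,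
        show p.2 • (q.1 + r.1) - (q.2 + r.2) • p.1 = (p.2 • q.1 - q.2 • p.1) + -(r.2 • p.1 - p.2 • r.1) from by module,
        show p.2 • r.1 - r.2 • p.1 = -(r.2 • p.1 - p.2 • r.1) from by module,
        show (r.2 + p.2) • q.1 - q.2 • (r.1 + p.1) = (p.2 • q.1 - q.2 • p.1) + -(q.2 • r.1 - r.2 • q.1) from by module,
        show q.2 • (r.1 + p.1) - (r.2 + p.2) • q.1 = (q.2 • r.1 - r.2 • q.1) + -(p.2 • q.1 - q.2 • p.1) from by module]
    exact jac_coeff hχ _ _ _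

end Aux4
section Aux5
variable {S : Type*} [AddCommGroup S] {χ : S → ℂˣ}

lemma Abrk_pairzero_left (c : ℂ) (y : TrigA S) :
    Abrk χ (c, (0 : (S × ℤ) →₀ ℂ)) y = 0 := Finsupp.sum_zero_index

lemma Abrk_zero_left (y : TrigA S) : Abrk χ 0 y = 0 := Abrk_pairzero_left 0 y

lemma Abrk_pairzero_right (c : ℂ) (x : TrigA S) :
    Abrk χ x (c, (0 : (S × ℤ) →₀ ℂ)) = 0 := by
  rw [Abrk_def]
  simp [Finsupp.sum_zero_index]

lemma Abrk_zero_right (x : TrigA S) : Abrk χ x 0 = 0 := Abrk_pairzero_right 0 x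

private lemma add_shuffle {M : Type*} [AddCommMonoid M] (a b c d e f : M)
    (h1 : a + c + e = 0) (h2 : b + d + f = 0) : (a + b) + (c + d) + (e + f) = 0 := by
  rw [show (a + b) + (c + d) + (e + f) = (a + c + e) + (b + d + f) from by abel, h1, h2, add_zero]

private lemma pair_split (f g : (S × ℤ) →₀ ℂ) :
    ((0 : ℂ), f + g) = ((0 : ℂ), f) + ((0 : ℂ), g) := by
  rw [Prod.mk_add_mk, add_zero]

lemma Abrk_jacobi (hχ : ∀ a b : S, χ (a + b) = χ a * χ b) (x y z : TrigA S) :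
    Abrk χ (Abrk χ x y) z + Abrk χ (Abrk χ y z) x + Abrk χ (Abrk χ z x) y = 0 := by
  have step : ∀ (u v w : TrigA S) (a b c A B C : ℂ), A • u + B • v + C • w = 0 →
      (a * b) • ((A * c) • u) + (b * c) • ((B * a) • v) + (c * a) • ((C * b) • w) = 0 := by
    intro u v w a b c A B C h
    rw [show (a * b) • ((A * c) • u) + (b * c) • ((B * a) • v) + (c * a) • ((C * b) • w)
        = (a * (b * c)) • (A • u + B • v + C • w) from by module, h, smul_zero]
  have key : ∀ (p q r : S × ℤ) (a b c : ℂ),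
      Abrk χ (Abrk χ ((0:ℂ), Finsupp.single p a) ((0:ℂ), Finsupp.single q b)) ((0:ℂ), Finsupp.single r c)
      + Abrk χ (Abrk χ ((0:ℂ), Finsupp.single q b) ((0:ℂ), Finsupp.single r c)) ((0:ℂ), Finsupp.single p a)
      + Abrk χ (Abrk χ ((0:ℂ), Finsupp.single r c) ((0:ℂ), Finsupp.single p a)) ((0:ℂ), Finsupp.single q b) = 0 := by
    intro p q r a b c
    simp only [Abrk_single_single, Abrk_smul_left, Abrk_AbrkBasis_single]
    exact step _ _ _ a b c _ _ _ (jacobi_basis hχ p q r)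
  have k2 : ∀ (p q : S × ℤ) (a b : ℂ) (h : (S × ℤ) →₀ ℂ),
      Abrk χ (Abrk χ ((0:ℂ), Finsupp.single p a) ((0:ℂ), Finsupp.single q b)) ((0:ℂ), h)
      + Abrk χ (Abrk χ ((0:ℂ), Finsupp.single q b) ((0:ℂ), h)) ((0:ℂ), Finsupp.single p a)
      + Abrk χ (Abrk χ ((0:ℂ), h) ((0:ℂ), Finsupp.single p a)) ((0:ℂ), Finsupp.single q b) = 0 := by
    intro p q a b h
    induction h using Finsupp.induction_linear with
    | zero => simp [Abrk_pairzero_left, Abrk_pairzero_right, Abrk_zero_left, Abrk_zero_right]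
    | add f g ihf ihg =>
        rw [pair_split, Abrk_add_right, Abrk_add_right, Abrk_add_left, Abrk_add_left, Abrk_add_left]
        exact add_shuffle _ _ _ _ _ _ ihf ihg
    | single r c => exact key p q r a b c
  have k1 : ∀ (p : S × ℤ) (a : ℂ) (g h : (S × ℤ) →₀ ℂ),
      Abrk χ (Abrk χ ((0:ℂ), Finsupp.single p a) ((0:ℂ), g)) ((0:ℂ), h)
      + Abrk χ (Abrk χ ((0:ℂ), g) ((0:ℂ), h)) ((0:ℂ), Finsupp.single p a)
      + Abrk χ (Abrk χ ((0:ℂ), h) ((0:ℂ), Finsupp.single p a)) ((0:ℂ), g) = 0 := by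
    intro p a g h
    induction g using Finsupp.induction_linear with
    | zero => simp [Abrk_pairzero_left, Abrk_pairzero_right, Abrk_zero_left, Abrk_zero_right]
    | add f g ihf ihg =>
        rw [pair_split, Abrk_add_right, Abrk_add_left, Abrk_add_left, Abrk_add_left, Abrk_add_right]
        exact add_shuffle _ _ _ _ _ _ ihf ihg
    | single q b => exact k2 p q a b h
  have k0 : ∀ (f g h : (S × ℤ) →₀ ℂ),
      Abrk χ (Abrk χ ((0:ℂ), f) ((0:ℂ), g)) ((0:ℂ), h)
      + Abrk χ (Abrk χ ((0:ℂ), g) ((0:ℂ), h)) ((0:ℂ), f)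
      + Abrk χ (Abrk χ ((0:ℂ), h) ((0:ℂ), f)) ((0:ℂ), g) = 0 := by
    intro f g h
    induction f using Finsupp.induction_linear with
    | zero => simp [Abrk_pairzero_left, Abrk_pairzero_right, Abrk_zero_left, Abrk_zero_right]
    | add f' g' ihf ihg =>
        rw [pair_split, Abrk_add_left, Abrk_add_left, Abrk_add_right, Abrk_add_right, Abrk_add_left]
        exact add_shuffle _ _ _ _ _ _ ihf ihg
    | single p a => exact k1 p a g h
  exact k0 x.2 y.2 z.2

end Aux5
section Aux6
variable {S : Type*} [AddCommGroup S] {χ : S → ℂˣ}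

/-- second component of `Φ` -/
noncomputable def Phi2 (χ : S → ℂˣ) : (((S × S) × ℤ) →₀ ℂ) →ₗ[ℂ] ((S × ℤ) →₀ ℂ) :=
  Finsupp.lsum ℂ fun P => ((χ (-P.1.2) ^ P.2 : ℂˣ) : ℂ) • Finsupp.lsingle (P.1.1, P.2)

/-- `Φ : L̂_S → Â_S`, collapsing `L_{α,β}⊗t^m ↦ χ(β)^{-m} A_{α,m}`, `k ↦ c`. -/
noncomputable def PhiMap (χ : S → ℂˣ) : HatL S →ₗ[ℂ] TrigA S :=
  LinearMap.prodMap LinearMap.id (Phi2 χ)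

/-- second component of `Ψ` -/
noncomputable def Psi2 (S : Type*) [AddCommGroup S] : ((S × ℤ) →₀ ℂ) →ₗ[ℂ] (((S × S) × ℤ) →₀ ℂ) :=
  Finsupp.lsum ℂ fun p => Finsupp.lsingle ((p.1, (0 : S)), p.2)

/-- `Ψ : Â_S → L̂_S`, `A_{α,m} ↦ L_{α,0}⊗t^m`, `c ↦ k`. -/
noncomputable def PsiMap (S : Type*) [AddCommGroup S] : TrigA S →ₗ[ℂ] HatL S :=
  LinearMap.prodMap LinearMap.id (Psi2 S)

lemma Phi_pair (c : ℂ) (f : ((S × S) × ℤ) →₀ ℂ) : PhiMap χ (c, f) = (c, Phi2 χ f) := rfl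

lemma Psi_pair (c : ℂ) (f : (S × ℤ) →₀ ℂ) : PsiMap S (c, f) = (c, Psi2 S f) := rfl

lemma Phi2_single (P : (S × S) × ℤ) (x : ℂ) :
    Phi2 χ (Finsupp.single P x) =
      Finsupp.single (P.1.1, P.2) (((χ (-P.1.2) ^ P.2 : ℂˣ) : ℂ) * x) := by
  simp [Phi2, Finsupp.smul_single]

lemma Psi2_single (p : S × ℤ) (x : ℂ) :
    Psi2 S (Finsupp.single p x) = Finsupp.single ((p.1, (0 : S)), p.2) x := by
  simp [Psi2]

lemma Phi_Psi (hχ : ∀ a b : S, χ (a + b) = χ a * χ b) (t : TrigA S) :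
    PhiMap χ (PsiMap S t) = t := by
  have h2 : (Phi2 χ).comp (Psi2 S) = LinearMap.id := by
    apply Finsupp.lhom_ext
    intro p x
    simp only [LinearMap.comp_apply, LinearMap.id_apply, Psi2_single, Phi2_single]
    rw [neg_zero, chi_zero hχ, one_zpow, Units.val_one, one_mul]
  calc PhiMap χ (PsiMap S t) = (t.1, (Phi2 χ).comp (Psi2 S) t.2) := rfl
  _ = t := by rw [h2]; rfl

/-- the embedding `a ⊗ t^m` as a linear map in `a` -/
noncomputable def EMap (S : Type*) [AddCommGroup S] (m : ℤ) :
    LSpace S →ₗ[ℂ] (((S × S) × ℤ) →₀ ℂ) :=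
  Finsupp.lsum ℂ fun r => Finsupp.lsingle (r, m)

lemma embedHat_eq (a : LSpace S) (m : ℤ) : embedHat a m = (0, EMap S m a) := rfl

/-- `σ_γ` as a linear map -/
noncomputable def SigMap (γ : S) : LSpace S →ₗ[ℂ] LSpace S :=
  Finsupp.lsum ℂ fun p => Finsupp.lsingle (p.1, p.2 + γ)

lemma sigmaL_eq (γ : S) (a : LSpace S) : sigmaL γ a = SigMap γ a := rfl

lemma Phi_gen (hχ : ∀ a b : S, χ (a + b) = χ a * χ b) (γ : S) (a : LSpace S) (m : ℤ) :
    PhiMap χ (((χ γ ^ m : ℂˣ) : ℂ) • embedHat (sigmaL γ a) m - embedHat a m) = 0 := by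
  have hcomp : ((χ γ ^ m : ℂˣ) : ℂ) • ((Phi2 χ).comp ((EMap S m).comp (SigMap γ)))
      = (Phi2 χ).comp (EMap S m) := by
    apply Finsupp.lhom_ext
    intro p x
    simp only [LinearMap.smul_apply, LinearMap.comp_apply, SigMap, EMap,
      Finsupp.lsum_single, Finsupp.lsingle_apply, Phi2_single, Finsupp.smul_single]
    congr 1
    show ((χ γ ^ m : ℂˣ) : ℂ) • (((χ (-(p.2 + γ)) ^ m : ℂˣ) : ℂ) * x) = _
    rw [smul_eq_mul, ← mul_assoc, ← Units.val_mul, ← mul_zpow, ← hχ,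
        show γ + -(p.2 + γ) = -p.2 from by abel]
  rw [map_sub, map_smul, embedHat_eq, sigmaL_eq, embedHat_eq, Phi_pair, Phi_pair]
  have := congrArg (fun L => L a) hcomp
  simp only [LinearMap.smul_apply, LinearMap.comp_apply] at this
  rw [Prod.smul_mk, smul_zero, Prod.mk_sub_mk, sub_zero, this, sub_self]
  rfl

lemma Icov_le_ker (hχ : ∀ a b : S, χ (a + b) = χ a * χ b) :
    Icov χ ≤ LinearMap.ker (PhiMap χ) := by
  rw [Icov, Submodule.span_le]
  rintro x ⟨γ, a, m, rfl⟩
  exact LinearMap.mem_ker.mpr (Phi_gen hχ γ a m)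

lemma sigmaL_single (γ : S) (p : S × S) (x : ℂ) :
    sigmaL γ (Finsupp.single p x) = Finsupp.single (p.1, p.2 + γ) x := by
  unfold sigmaL
  rw [Finsupp.sum_single_index]
  simp

lemma embedHat_single (p : S × S) (x : ℂ) (m : ℤ) :
    embedHat (Finsupp.single p x) m = (0, Finsupp.single (p, m) x) := by
  unfold embedHat
  rw [Finsupp.sum_single_index]
  simp

end Aux6
section Aux7
variable {S : Type*} [AddCommGroup S] {χ : S → ℂˣ}

lemma sub_psi_phi_mem (hχ : ∀ a b : S, χ (a + b) = χ a * χ b) (x : HatL S) :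
    x - PsiMap S (PhiMap χ x) ∈ Icov χ := by
  have hpair : x = ((x.1, 0) : HatL S) + (0, x.2) := by
    rw [Prod.mk_add_mk, add_zero, zero_add]
  rw [hpair]
  have h1 : ((x.1, 0) : HatL S) - PsiMap S (PhiMap χ (x.1, 0)) ∈ Icov χ := by
    rw [Phi_pair, map_zero, Psi_pair, map_zero, sub_self]
    exact Submodule.zero_mem _
  have h2 : ∀ f : ((S × S) × ℤ) →₀ ℂ,
      ((0, f) : HatL S) - PsiMap S (PhiMap χ (0, f)) ∈ Icov χ := by
    intro f
    induction f using Finsupp.induction_linear with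
    | zero => rw [Phi_pair, map_zero, Psi_pair, map_zero, sub_self]; exact Submodule.zero_mem _
    | add f g ihf ihg =>
        rw [show ((0, f + g) : HatL S) = (0, f) + (0, g) from by rw [Prod.mk_add_mk, add_zero],
          map_add, map_add, add_sub_add_comm]
        exact Submodule.add_mem _ ihf ihg
    | single P x =>
        obtain ⟨⟨α, β⟩, m⟩ := P
        rw [Phi_pair, Psi_pair, Phi2_single, Psi2_single]
        have hval : ((χ (-β) ^ m : ℂˣ) : ℂ) * ((χ β ^ m : ℂˣ) : ℂ) = 1 := by
          rw [← Units.val_mul, ← mul_zpow, ← hχ, neg_add_cancel, chi_zero hχ, one_zpow,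
            Units.val_one]
        have hgen : ((χ β ^ m : ℂˣ) : ℂ) • embedHat (sigmaL β (Lgen α 0)) m
            - embedHat (Lgen α 0) m ∈ Icov χ :=
          Submodule.subset_span ⟨β, Lgen α 0, m, rfl⟩
        have key : ((0, Finsupp.single ((α, β), m) x) : HatL S)
            - (0, Finsupp.single ((α, 0), m) (((χ (-β) ^ m : ℂˣ) : ℂ) * x))
            = (x * ((χ (-β) ^ m : ℂˣ) : ℂ)) •
              (((χ β ^ m : ℂˣ) : ℂ) • embedHat (sigmaL β (Lgen α 0)) m
                - embedHat (Lgen α 0) m) := by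
          rw [Lgen, sigmaL_single, embedHat_single, embedHat_single]
          dsimp only
          rw [zero_add, smul_sub, smul_smul, mul_assoc, hval, mul_one]
          simp [Prod.smul_mk, Finsupp.smul_single, mul_comm]
        dsimp only at key ⊢
        rw [key]
        exact Submodule.smul_mem _ _ hgen
  rw [map_add, map_add, add_sub_add_comm]
  exact Submodule.add_mem _ h1 (h2 x.2)

lemma mem_Icov_iff (hχ : ∀ a b : S, χ (a + b) = χ a * χ b) (x : HatL S) :
    x ∈ Icov χ ↔ PhiMap χ x = 0 := by
  constructor
  · intro hx; exact LinearMap.mem_ker.mp (Icov_le_ker hχ hx)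
  · intro hx
    have := sub_psi_phi_mem hχ x
    rwa [hx, map_zero, sub_zero] at this

end Aux7
section Aux8
variable {S : Type*} [AddCommGroup S] {χ : S → ℂˣ}

/-- the `γ`-sum appearing in the covariant bracket -/
noncomputable def Fsum (χ : S → ℂˣ) (P Q : (S × S) × ℤ) : HatL S :=
  ∑ᶠ γ : S, ((χ γ ^ P.2 : ℂˣ) : ℂ) • hatBrkBasis ((P.1.1, P.1.2 + γ), P.2) Q

lemma hatBrkCov_def (x y : HatL S) :
    hatBrkCov χ x y = x.2.sum fun P a => y.2.sum fun Q b => (a * b) • Fsum χ P Q := rfl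

lemma Phi_Fsum (hχ : ∀ a b : S, χ (a + b) = χ a * χ b) (α β μ ν : S) (m n : ℤ) :
    PhiMap χ (Fsum χ ((α, β), m) ((μ, ν), n)) =
      (((χ (-β) ^ m : ℂˣ) : ℂ) * ((χ (-ν) ^ n : ℂˣ) : ℂ)) • AbrkBasis χ (α, m) (μ, n) := by
  have hu_neg := chi_neg hχ
  have hu_sub : ∀ s t : S, χ (s - t) = χ s * (χ t)⁻¹ := fun s t => by
    rw [sub_eq_add_neg, hχ, hu_neg]
  have hu_z := chi_zsmul hχ
  set F0 : S → HatL S := fun γ =>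
    (((χ γ ^ m : ℂˣ) : ℂ) * (if m + n = 0 then (m : ℂ) * LformBasis (α, β + γ) (μ, ν) else 0), 0)
    with hF0def
  set F1 : S → HatL S := fun γ =>
    (0, ((χ γ ^ m : ℂˣ) : ℂ) •
      ((LmulBasis (α, β + γ) (μ, ν)).sum fun r x => Finsupp.single (r, m + n) x)) with hF1def
  set F2 : S → HatL S := fun γ =>
    (0, -(((χ γ ^ m : ℂˣ) : ℂ) •
      ((LmulBasis (μ, ν) (α, β + γ)).sum fun r x => Finsupp.single (r, m + n) x))) with hF2def
  have hF : ∀ γ : S, ((χ γ ^ m : ℂˣ) : ℂ) • hatBrkBasis ((α, β + γ), m) ((μ, ν), n)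
      = F0 γ + F1 γ + F2 γ := by
    intro γ
    rw [hF0def, hF1def, hF2def]
    show ((χ γ ^ m : ℂˣ) : ℂ) • (((if m + n = 0 then (m : ℂ) * LformBasis (α, β + γ) (μ, ν) else 0),
      (LmulBasis (α, β + γ) (μ, ν) - LmulBasis (μ, ν) (α, β + γ)).sum
        fun r x => Finsupp.single (r, m + n) x) : HatL S) = _
    rw [Finsupp.sum_sub_index (fun r b₁ b₂ => Finsupp.single_sub _ _ _)]
    rw [Prod.smul_mk, smul_eq_mul, smul_sub]
    rw [Prod.mk_add_mk, Prod.mk_add_mk]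
    rw [add_zero, add_zero, zero_add]
    rw [sub_eq_add_neg]
  have hs0 : ∀ γ : S, γ ≠ ν - β → F0 γ = 0 := by
    intro γ hγ
    rw [hF0def]
    have : LformBasis (α, β + γ) (μ, ν) = 0 := by
      unfold LformBasis
      rw [if_neg]
      rintro ⟨-, h2⟩
      dsimp only at h2
      exact hγ (by rw [← h2]; abel)
    simp [this]
  have hs1 : ∀ γ : S, γ ≠ α + μ + ν - β → F1 γ = 0 := by
    intro γ hγ
    rw [hF1def]
    have : LmulBasis (α, β + γ) (μ, ν) = 0 := by
      unfold LmulBasis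
      rw [if_neg]
      intro hc
      refine hγ ?_
      dsimp only at hc
      rw [hc]; abel
    simp [this]
  have hs2 : ∀ γ : S, γ ≠ ν - β - μ - α → F2 γ = 0 := by
    intro γ hγ
    rw [hF2def]
    have : LmulBasis (μ, ν) (α, β + γ) = 0 := by
      unfold LmulBasis
      rw [if_neg]
      intro hc
      refine hγ ?_
      dsimp only at hc
      have h3 : β + γ = ν - (μ + α) := by rw [hc]; abel
      calc γ = β + γ - β := by abel
      _ = ν - (μ + α) - β := by rw [h3]
      _ = ν - β - μ - α := by abel
    simp [this]
  have hfin0 : (Function.support F0).Finite :=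
    Set.Finite.subset (Set.finite_singleton (ν - β)) (fun γ hγ => by
      by_contra h; exact hγ (hs0 γ h))
  have hfin1 : (Function.support F1).Finite :=
    Set.Finite.subset (Set.finite_singleton (α + μ + ν - β)) (fun γ hγ => by
      by_contra h; exact hγ (hs1 γ h))
  have hfin2 : (Function.support F2).Finite :=
    Set.Finite.subset (Set.finite_singleton (ν - β - μ - α)) (fun γ hγ => by
      by_contra h; exact hγ (hs2 γ h))
  have hsum : Fsum χ ((α, β), m) ((μ, ν), n) = F0 (ν - β) + F1 (α + μ + ν - β) + F2 (ν - β - μ - α) := by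
    unfold Fsum
    dsimp only
    rw [show (∑ᶠ γ : S, ((χ γ ^ m : ℂˣ) : ℂ) • hatBrkBasis ((α, β + γ), m) ((μ, ν), n))
        = ∑ᶠ γ : S, (F0 γ + F1 γ + F2 γ) from by
      exact finsum_congr hF]
    rw [finsum_add_distrib (Set.Finite.subset (hfin0.union hfin1)
        (Function.support_add _ _)) hfin2,
      finsum_add_distrib hfin0 hfin1,
      finsum_eq_single F0 (ν - β) hs0,
      finsum_eq_single F1 (α + μ + ν - β) hs1,
      finsum_eq_single F2 (ν - β - μ - α) hs2]
  rw [hsum, map_add, map_add, hF0def, hF1def, hF2def]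
  dsimp only
  rw [show LmulBasis (α, β + (α + μ + ν - β)) (μ, ν) = Finsupp.single (α + μ, α + ν) 1 from by
        unfold LmulBasis; exact if_pos (by dsimp only; abel),
      show LmulBasis (μ, ν) (α, β + (ν - β - μ - α))
          = Finsupp.single (μ + α, μ + (β + (ν - β - μ - α))) 1 from by
        unfold LmulBasis; exact if_pos (by dsimp only; abel),
      show LformBasis (α, β + (ν - β)) (μ, ν) = (if α + μ = 0 then 1 else 0 : ℂ) from by
        unfold LformBasis; rw [show β + (ν - β) = ν from by abel]; simp,
      Finsupp.sum_single_index (by exact Finsupp.single_zero _),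
      Finsupp.sum_single_index (by exact Finsupp.single_zero _),
      Finsupp.smul_single, Finsupp.smul_single]
  rw [Phi_pair, Phi_pair, Phi_pair, map_zero, map_neg, Phi2_single, Phi2_single]
  dsimp only
  rw [AbrkBasis_eq]
  dsimp only
  rw [show μ + (β + (ν - β - μ - α)) = ν - α from by abel]
  rw [Prod.smul_mk, Finsupp.smul_single, Prod.mk_add_mk, Prod.mk_add_mk, Prod.mk.injEq]
  constructor
  · rw [add_zero, add_zero, smul_eq_mul]
    by_cases h1 : α + μ = 0 <;> by_cases h2 : m + n = 0
    · have hn : n = -m := by omega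
      subst hn
      have hcen : (χ (ν - β) ^ m : ℂˣ) = χ (-β) ^ m * χ (-ν) ^ (-m) := by
        simp only [← hu_z, ← hχ]
        exact congrArg χ (by module)
      rw [if_pos h2, if_pos h1, if_pos (And.intro h1 h2), mul_one, hcen, Units.val_mul,
        smul_eq_mul]
      try ring
    · rw [if_neg h2, if_neg (fun h : (α + μ = 0) ∧ (m + n = 0) => h2 h.2)]; try simp
    · rw [if_pos h2, if_neg h1, if_neg (fun h : (α + μ = 0) ∧ (m + n = 0) => h1 h.1)]; try simp
    · rw [if_neg h2, if_neg (fun h : (α + μ = 0) ∧ (m + n = 0) => h2 h.2)]; try simp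
  · rw [zero_add, show ((μ + α : S), (m + n : ℤ)) = ((α + μ : S), (m + n : ℤ)) from by
      rw [add_comm μ α], ← Finsupp.single_neg, ← Finsupp.single_add]
    congr 1
    have hc1 : (χ (-(α+ν)) ^ (m+n) * χ (α+μ+ν-β) ^ m : ℂˣ)
        = χ (-β)^m * χ (-ν)^n * χ (m • μ - n • α) := by
      simp only [← hu_z, ← hχ]
      exact congrArg χ (by module)
    have hc2 : (χ (-(ν - α)) ^ (m+n) * χ (ν-β-μ-α) ^ m : ℂˣ)
        = χ (-β)^m * χ (-ν)^n * χ (n • α - m • μ) := by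
      simp only [← hu_z, ← hχ]
      exact congrArg χ (by module)
    have hc1' : ((χ (-(α+ν)) ^ (m+n) : ℂˣ) : ℂ) * ((χ (α+μ+ν-β) ^ m : ℂˣ) : ℂ)
        = ((χ (-β)^m : ℂˣ) : ℂ) * ((χ (-ν)^n : ℂˣ) : ℂ) * ((χ (m • μ - n • α) : ℂˣ) : ℂ) := by
      exact_mod_cast congrArg Units.val hc1
    have hc2' : ((χ (-(ν - α)) ^ (m+n) : ℂˣ) : ℂ) * ((χ (ν-β-μ-α) ^ m : ℂˣ) : ℂ)
        = ((χ (-β)^m : ℂˣ) : ℂ) * ((χ (-ν)^n : ℂˣ) : ℂ) * ((χ (n • α - m • μ) : ℂˣ) : ℂ) := by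
      exact_mod_cast congrArg Units.val hc2
    unfold Acoef
    dsimp only
    rw [smul_eq_mul, smul_eq_mul, smul_eq_mul, mul_one, mul_one, mul_sub]
    linear_combination hc1' - hc2'

end Aux8
section Aux9
variable {S : Type*} [AddCommGroup S] {χ : S → ℂˣ}

lemma hcov_inner_zero (y : HatL S) (P : (S × S) × ℤ) :
    (y.2.sum fun Q b => ((0:ℂ) * b) • Fsum χ P Q) = 0 := by simp

lemma hatBrkCov_add_left (x x' y : HatL S) :
    hatBrkCov χ (x + x') y = hatBrkCov χ x y + hatBrkCov χ x' y := by
  rw [hatBrkCov_def, hatBrkCov_def, hatBrkCov_def]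
  show (x.2 + x'.2).sum _ = _
  rw [Finsupp.sum_add_index' (fun P => hcov_inner_zero y P)]
  intro P a a'
  rw [← Finsupp.sum_add]
  congr 1; funext Q b
  rw [add_mul]; module

lemma hatBrkCov_add_right (x y y' : HatL S) :
    hatBrkCov χ x (y + y') = hatBrkCov χ x y + hatBrkCov χ x y' := by
  rw [hatBrkCov_def, hatBrkCov_def, hatBrkCov_def, ← Finsupp.sum_add]
  congr 1; funext P a
  show (y.2 + y'.2).sum _ = _
  rw [Finsupp.sum_add_index' (by simp) (fun Q b b' => by rw [mul_add]; module)]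

lemma hatBrkCov_single_single (c d : ℂ) (P Q : (S × S) × ℤ) (a b : ℂ) :
    hatBrkCov χ (c, Finsupp.single P a) (d, Finsupp.single Q b) = (a * b) • Fsum χ P Q := by
  rw [hatBrkCov_def]
  show (Finsupp.single P a).sum _ = _
  rw [Finsupp.sum_single_index (hcov_inner_zero (d, Finsupp.single Q b) P)]
  show (Finsupp.single Q b).sum _ = _
  rw [Finsupp.sum_single_index (by simp)]

private lemma pair_split' (f g : ((S × S) × ℤ) →₀ ℂ) :
    ((0 : ℂ), f + g) = (((0 : ℂ), f) : HatL S) + ((0 : ℂ), g) := by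
  rw [Prod.mk_add_mk, add_zero]

lemma Phi_hatBrkCov (hχ : ∀ a b : S, χ (a + b) = χ a * χ b) (x y : HatL S) :
    PhiMap χ (hatBrkCov χ x y) = Abrk χ (PhiMap χ x) (PhiMap χ y) := by
  suffices H : ∀ f g : ((S × S) × ℤ) →₀ ℂ,
      PhiMap χ (hatBrkCov χ ((0:ℂ), f) ((0:ℂ), g))
        = Abrk χ (PhiMap χ ((0:ℂ), f)) (PhiMap χ ((0:ℂ), g)) by
    exact H x.2 y.2
  intro f g
  induction f using Finsupp.induction_linear generalizing g with
  | zero =>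
      rw [show hatBrkCov χ ((0:ℂ), (0 : ((S × S) × ℤ) →₀ ℂ)) ((0:ℂ), g) = 0 from
        Finsupp.sum_zero_index, map_zero, Phi_pair, map_zero]
      exact (Abrk_pairzero_left 0 _).symm
  | add f f' ihf ihf' =>
      rw [pair_split', hatBrkCov_add_left, map_add, map_add, Abrk_add_left, ihf, ihf']
  | single P a =>
      induction g using Finsupp.induction_linear with
      | zero =>
          rw [show hatBrkCov χ ((0:ℂ), Finsupp.single P a) ((0:ℂ), (0 : ((S × S) × ℤ) →₀ ℂ)) = 0
            from by rw [hatBrkCov_def]; simp [Finsupp.sum_zero_index], map_zero, Phi_pair, Phi_pair,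
            map_zero]
          exact (Abrk_pairzero_right 0 _).symm
      | add g g' ihg ihg' =>
          rw [pair_split', hatBrkCov_add_right, map_add, map_add, Abrk_add_right, ihg, ihg']
      | single Q b =>
          obtain ⟨⟨α, β⟩, m⟩ := P
          obtain ⟨⟨μ, ν⟩, n⟩ := Q
          rw [hatBrkCov_single_single, map_smul, Phi_Fsum hχ, Phi_pair, Phi_pair,
            Phi2_single, Phi2_single, Abrk_single_single]
          dsimp only
          rw [smul_smul]
          congr 1
          ring

end Aux9

theorem stmt9 {S : Type*} [AddCommGroup S] (χ : S → ℂˣ)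
    (hχ : ∀ a b : S, χ (a + b) = χ a * χ b) :
    -- `I_S` is a two-sided ideal for `[·,·]_S`
    (∀ x ∈ Icov χ, ∀ y : HatL S, hatBrkCov χ x y ∈ Icov χ ∧ hatBrkCov χ y x ∈ Icov χ) ∧
    -- the induced operation on the quotient `L̂_S/I_S` is a Lie bracket, and `Â_S` is
    -- isomorphic, as a complex Lie algebra, to this quotient via `ψ_A`
    (∃ b : (HatL S ⧸ Icov χ) → (HatL S ⧸ Icov χ) → (HatL S ⧸ Icov χ),
      (∀ x y : HatL S, b (Submodule.Quotient.mk x) (Submodule.Quotient.mk y) =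
        Submodule.Quotient.mk (hatBrkCov χ x y)) ∧
      (∀ x, b x x = 0) ∧
      (∀ x y z, b (b x y) z + b (b y z) x + b (b z x) y = 0) ∧
      ∃ ψ : TrigA S ≃ₗ[ℂ] (HatL S ⧸ Icov χ),
        ψ (Acen S) = Submodule.Quotient.mk (Hatk S) ∧
        (∀ (α : S) (m : ℤ),
          ψ (Agen α m) = Submodule.Quotient.mk (embedHat (Lgen α 0) m)) ∧
        (∀ x y : TrigA S, ψ (Abrk χ x y) = b (ψ x) (ψ y))) := by
  constructor
  · intro x hx y
    constructor
    · refine (mem_Icov_iff hχ _).mpr ?_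
      rw [Phi_hatBrkCov hχ, (mem_Icov_iff hχ x).mp hx, Abrk_zero_left]
    · refine (mem_Icov_iff hχ _).mpr ?_
      rw [Phi_hatBrkCov hχ, (mem_Icov_iff hχ x).mp hx, Abrk_zero_right]
  · let ψf : TrigA S →ₗ[ℂ] HatL S ⧸ Icov χ := (Icov χ).mkQ.comp (PsiMap S)
    let ψg : (HatL S ⧸ Icov χ) →ₗ[ℂ] TrigA S := (Icov χ).liftQ (PhiMap χ) (Icov_le_ker hχ)
    have hmk : ∀ z : HatL S, ψf (PhiMap χ z) = Submodule.Quotient.mk z := by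
      intro z
      show (Icov χ).mkQ (PsiMap S (PhiMap χ z)) = _
      rw [Submodule.mkQ_apply]
      refine (Submodule.Quotient.eq _).mpr ?_
      rw [show PsiMap S (PhiMap χ z) - z = -(z - PsiMap S (PhiMap χ z)) from by abel]
      exact Submodule.neg_mem _ (sub_psi_phi_mem hχ z)
    have hgf : ∀ t, ψg (ψf t) = t := by
      intro t
      show ψg ((Icov χ).mkQ (PsiMap S t)) = t
      rw [Submodule.mkQ_apply, Submodule.liftQ_apply]
      exact Phi_Psi hχ t
    have hfg : ∀ u, ψf (ψg u) = u := by
      intro u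
      obtain ⟨z, rfl⟩ := Submodule.Quotient.mk_surjective _ u
      rw [show ψg (Submodule.Quotient.mk z) = PhiMap χ z from Submodule.liftQ_apply _ _ z]
      exact hmk z
    let e : TrigA S ≃ₗ[ℂ] HatL S ⧸ Icov χ :=
      LinearEquiv.ofLinear ψf ψg (LinearMap.ext hfg) (LinearMap.ext hgf)
    have he : ∀ t, e t = ψf t := fun t => rfl
    have hes : ∀ u, e.symm u = ψg u := fun u => rfl
    refine ⟨fun u v => e (Abrk χ (e.symm u) (e.symm v)), ?_, ?_, ?_, e, ?_, ?_, ?_⟩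
    · intro x y
      beta_reduce
      rw [hes, hes, show ψg (Submodule.Quotient.mk x) = PhiMap χ x from Submodule.liftQ_apply _ _ x,
        show ψg (Submodule.Quotient.mk y) = PhiMap χ y from Submodule.liftQ_apply _ _ y,
        ← Phi_hatBrkCov hχ, he]
      exact hmk _
    · intro u
      beta_reduce
      rw [Abrk_self, map_zero]
    · intro u v w
      beta_reduce
      rw [LinearEquiv.symm_apply_apply, LinearEquiv.symm_apply_apply,
        LinearEquiv.symm_apply_apply, ← map_add, ← map_add, Abrk_jacobi hχ, map_zero]
    · rw [he]
      show (Icov χ).mkQ (PsiMap S (Acen S)) = _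
      rw [show PsiMap S (Acen S) = Hatk S from by
        rw [Acen, Psi_pair, map_zero]; rfl, Submodule.mkQ_apply]
    · intro α m
      rw [he]
      show (Icov χ).mkQ (PsiMap S (Agen α m)) = _
      rw [show PsiMap S (Agen α m) = embedHat (Lgen α 0) m from by
        rw [Agen, Psi_pair, Psi2_single, Lgen, embedHat_single], Submodule.mkQ_apply]
    · intro x y
      beta_reduce
      rw [LinearEquiv.symm_apply_apply, LinearEquiv.symm_apply_apply]
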